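/- Let U, V ⊆ ℂ be open sets, G : U → V holomorphic with nowhere-vanishing derivative, ℓ : U → ℂ holomorphic with exp(ℓ(z)) = G'(z) for all z ∈ U (a branch of log G'), v : V → ℂ holomorphic, η : V → ℂ continuously real-differentiable, and μ, μ* ∈ ℂ. Define the pushforwards η̃(z) := η(G(z)) + μ·ℓ(z) + μ*·conj(ℓ(z)) and ṽ(z) := v(G(z))/G'(z) on U. Then for every z ∈ U: ṽ(z)·∂η̃(z) + conj(ṽ(z))·∂̄η̃(z) + μ·ṽ'(z) + μ*·conj(ṽ'(z)) = v(G(z))·(∂η)(G(z)) + conj(v(G(z)))·(∂̄η)(G(z)) + μ·v'(G(z)) + μ*·conj(v'(G(z))). In other words, the Lie derivative of a pre-pre-Schwarzian of order (μ, μ*) transforms as a scalar under holomorphic changes of coordinates. -/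

import Mathlib

open Complex

/-- Wirtinger derivative `∂f = (1/2)(∂f/∂x - i ∂f/∂y)`. -/
noncomputable def wD (f : ℂ → ℂ) (z : ℂ) : ℂ :=
  (fderiv ℝ f z 1 - Complex.I * fderiv ℝ f z Complex.I) / 2

/-- Conjugate Wirtinger derivative `∂̄f = (1/2)(∂f/∂x + i ∂f/∂y)`. -/
noncomputable def wDbar (f : ℂ → ℂ) (z : ℂ) : ℂ :=
  (fderiv ℝ f z 1 + Complex.I * fderiv ℝ f z Complex.I) / 2

lemma clm_apply_wirt (L : ℂ →L[ℝ] ℂ) (a : ℂ) :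
    L a = (L 1 - Complex.I * L Complex.I) / 2 * a
        + (L 1 + Complex.I * L Complex.I) / 2 * (starRingEnd ℂ) a := by
  have h : a = a.re • (1:ℂ) + a.im • Complex.I := by
    simp [Complex.real_smul, Complex.re_add_im]
  have hc : (starRingEnd ℂ) a = (a.re:ℂ) - a.im * Complex.I := by
    simp [Complex.ext_iff]
  have ha : a = (a.re:ℂ) + a.im * Complex.I := (Complex.re_add_im a).symm
  nth_rewrite 1 [h]
  rw [map_add, map_smul, map_smul, hc]
  simp only [Complex.real_smul]
  linear_combination ((L 1 - Complex.I * L Complex.I)/2 + (L Complex.I * Complex.I - L 1)) * ha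
    + ((a.im:ℂ) * L Complex.I) * Complex.I_mul_I

/-- The Lie derivative of a pre-pre-Schwarzian of order (μ, μ*) transforms
as a scalar under holomorphic changes of coordinates. -/
theorem lie_derivative_prePreSchwarzian_scalar
    (U V : Set ℂ) (hU : IsOpen U) (hV : IsOpen V)
    (G G' ℓ v v' η : ℂ → ℂ) (μ μs : ℂ)
    (hG : ∀ z ∈ U, HasDerivAt G (G' z) z)
    (hG'ne : ∀ z ∈ U, G' z ≠ 0)
    (hGmap : Set.MapsTo G U V)
    (hℓ : DifferentiableOn ℂ ℓ U)
    (hexp : ∀ z ∈ U, Complex.exp (ℓ z) = G' z)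
    (hv : ∀ w ∈ V, HasDerivAt v (v' w) w)
    (hη : ContDiffOn ℝ 1 η V)
    (ηt vt : ℂ → ℂ)
    (hηt : ∀ z, ηt z = η (G z) + μ * ℓ z + μs * (starRingEnd ℂ) (ℓ z))
    (hvt : ∀ z, vt z = v (G z) / G' z) :
    ∀ z ∈ U,
      vt z * wD ηt z + (starRingEnd ℂ) (vt z) * wDbar ηt z
        + μ * deriv vt z + μs * (starRingEnd ℂ) (deriv vt z)
      = v (G z) * wD η (G z) + (starRingEnd ℂ) (v (G z)) * wDbar η (G z)
        + μ * v' (G z) + μs * (starRingEnd ℂ) (v' (G z)) := by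
  intro z hz
  have hzU : U ∈ nhds z := hU.mem_nhds hz
  have hw : G z ∈ V := hGmap hz
  have hGz := hG z hz
  have hg : G' z ≠ 0 := hG'ne z hz
  have hℓz : HasDerivAt ℓ (deriv ℓ z) z := ((hℓ z hz).differentiableAt hzU).hasDerivAt
  set L := deriv ℓ z with hLdef
  set w := G z with hwdef
  have hηd : DifferentiableAt ℝ η w :=
    (hη.contDiffAt (hV.mem_nhds hw)).differentiableAt one_ne_zero
  set Dη := fderiv ℝ η w with hDη
  -- fderiv of ηt
  have hGr : HasFDerivAt G (((1 : ℂ →L[ℂ] ℂ).smulRight (G' z)).restrictScalars ℝ) z :=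
    hGz.hasFDerivAt.restrictScalars ℝ
  have hℓr : HasFDerivAt ℓ (((1 : ℂ →L[ℂ] ℂ).smulRight L).restrictScalars ℝ) z :=
    hℓz.hasFDerivAt.restrictScalars ℝ
  have h1 : HasFDerivAt (fun x => η (G x))
      (Dη.comp (((1 : ℂ →L[ℂ] ℂ).smulRight (G' z)).restrictScalars ℝ)) z :=
    hηd.hasFDerivAt.comp z hGr
  have h2 : HasFDerivAt (fun x => μ * ℓ x)
      (μ • (((1 : ℂ →L[ℂ] ℂ).smulRight L).restrictScalars ℝ)) z :=
    hℓr.const_mul μ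
  have h3c : HasFDerivAt (fun x => (starRingEnd ℂ) (ℓ x))
      ((Complex.conjCLE.toContinuousLinearMap).comp
        (((1 : ℂ →L[ℂ] ℂ).smulRight L).restrictScalars ℝ)) z :=
    (Complex.conjCLE.toContinuousLinearMap.hasFDerivAt).comp z hℓr
  have h3 : HasFDerivAt (fun x => μs * (starRingEnd ℂ) (ℓ x))
      (μs • ((Complex.conjCLE.toContinuousLinearMap).comp
        (((1 : ℂ →L[ℂ] ℂ).smulRight L).restrictScalars ℝ))) z :=
    h3c.const_mul μs
  have heq : ηt = fun x => η (G x) + μ * ℓ x + μs * (starRingEnd ℂ) (ℓ x) := funext hηt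
  have hFt := ((h1.add h2).add h3).congr_of_eventuallyEq (Filter.Eventually.of_forall hηt)
  have hfd := hFt.fderiv
  -- key evaluations
  have ev : ∀ u : ℂ, fderiv ℝ ηt z u = Dη (u * G' z) + μ * (u * L) + μs * (starRingEnd ℂ) (u * L) := by
    intro u
    rw [hfd]
    simp [ContinuousLinearMap.smulRight_apply, smul_eq_mul, mul_comm]
  have e1 : wD ηt z = wD η w * G' z + μ * L := by
    simp only [wD, ev, one_mul]
    rw [clm_apply_wirt Dη (G' z), clm_apply_wirt Dη (Complex.I * G' z)]
    simp only [map_mul, Complex.conj_I, ← hDη]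
    linear_combination (-(Dη 1) * G' z / 4 + Complex.I * Dη Complex.I * G' z / 4
      - μ * L / 2 + μs * (starRingEnd ℂ) L
      + Dη 1 * (starRingEnd ℂ) (G' z) / 4 + Complex.I * Dη Complex.I * (starRingEnd ℂ) (G' z) / 4
      - μs * (starRingEnd ℂ) L / 2) * Complex.I_mul_I
  have e2 : wDbar ηt z = wDbar η w * (starRingEnd ℂ) (G' z) + μs * (starRingEnd ℂ) L := by
    simp only [wDbar, ev, one_mul]
    rw [clm_apply_wirt Dη (G' z), clm_apply_wirt Dη (Complex.I * G' z)]
    simp only [map_mul, Complex.conj_I, ← hDη]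
    linear_combination (-(Dη 1) * (starRingEnd ℂ) (G' z) / 4
      - Complex.I * Dη Complex.I * (starRingEnd ℂ) (G' z) / 4
      - μs * (starRingEnd ℂ) L / 2
      + Dη 1 * G' z / 4 - Complex.I * Dη Complex.I * G' z / 4 + μ * L / 2) * Complex.I_mul_I
  -- deriv of vt
  have hvtd : HasDerivAt vt
      ((v' w * G' z) * Complex.exp (-ℓ z) + v w * (Complex.exp (-ℓ z) * -L)) z := by
    have h4 : HasDerivAt (fun x => v (G x)) (v' w * G' z) z := (hv w hw).comp z hGz
    have h5 : HasDerivAt (fun x => Complex.exp (-ℓ x)) (Complex.exp (-ℓ z) * -L) z :=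
      (hℓz.neg).cexp
    refine (h4.mul h5).congr_of_eventuallyEq ?_
    filter_upwards [hzU] with x hx
    rw [hvt x, ← hexp x hx, Pi.mul_apply, Complex.exp_neg, div_eq_mul_inv]
  have hdvt : deriv vt z = v' w - v w * L * (G' z)⁻¹ := by
    rw [hvtd.deriv, Complex.exp_neg, hexp z hz]
    field_simp
    ring
  -- finish
  have hgc : (starRingEnd ℂ) (G' z) ≠ 0 := by simpa using hg
  rw [hvt z, e1, e2, hdvt, ← hwdef]
  simp only [map_sub, map_mul, map_add, map_div₀, map_inv₀]
  field_simp
  ring
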